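/- Let g : X → X be a measure-preserving transformation of a probability space (X, μ) and let A ⊆ X have μ(A) > 0. For N, n ∈ ℕ define A_N^n = {x ∈ A : g^j(x) ∉ A for all j with n−N ≤ j ≤ n}. Then for every ε > 0 there exists N ∈ ℕ such that μ(A_N^n) < ε for every n > N. -/
import Mathlib


open MeasureTheory

theorem measure_no_return_small {X : Type*} [MeasurableSpace X]
    (μ : Measure X) [IsProbabilityMeasure μ] (g : X → X)
    (hg : MeasurePreserving g μ μ) (A : Set X) (hA : MeasurableSet A)
    (hApos : 0 < μ A) :
    ∀ ε : ℝ, 0 < ε → ∃ N : ℕ, ∀ n : ℕ, n > N →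
      μ {x ∈ A | ∀ j : ℕ, n - N ≤ j → j ≤ n → g^[j] x ∉ A} < ENNReal.ofReal ε := by
  intro ε hε
  set C : ℕ → Set X := fun N => ⋂ j ≤ N, g^[j] ⁻¹' Aᶜ with hC
  set Cinf : Set X := ⋂ j, g^[j] ⁻¹' Aᶜ with hCinf
  have hmemC : ∀ N x, x ∈ C N ↔ ∀ j ≤ N, g^[j] x ∉ A := by
    intro N x
    simp only [hC, Set.mem_iInter, Set.mem_preimage, Set.mem_compl_iff]
  have hmemCinf : ∀ x, x ∈ Cinf ↔ ∀ j, g^[j] x ∉ A := by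
    intro x
    simp only [hCinf, Set.mem_iInter, Set.mem_preimage, Set.mem_compl_iff]
  have hmg : ∀ j : ℕ, Measurable (g^[j]) := fun j => hg.measurable.iterate j
  have hCmeas : ∀ N, MeasurableSet (C N) := fun N =>
    MeasurableSet.biInter (Set.to_countable _) fun j _ => (hmg j) hA.compl
  have hCinfmeas : MeasurableSet Cinf :=
    MeasurableSet.iInter fun j => (hmg j) hA.compl
  have hanti : Antitone C := fun M N hMN =>
    Set.biInter_subset_biInter_left fun j hj => le_trans hj hMN
  have hiInter : ⋂ N, C N = Cinf := by
    apply Set.Subset.antisymm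
    · intro x hx
      rw [hmemCinf]
      intro j
      exact (hmemC j x).mp (Set.mem_iInter.mp hx j) j le_rfl
    · intro x hx
      exact Set.mem_iInter.mpr fun N =>
        (hmemC N x).mpr fun j _ => (hmemCinf x).mp hx j
  -- Cinf is backward invariant
  have hinv : ∀ k : ℕ, Cinf ⊆ g^[k] ⁻¹' Cinf := by
    intro k x hx
    rw [Set.mem_preimage, hmemCinf]
    intro j
    rw [← Function.iterate_add_apply]
    exact (hmemCinf x).mp hx (j + k)
  have hnull : ∀ k : ℕ, μ (g^[k] ⁻¹' Cinf \ Cinf) = 0 := by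
    intro k
    have hmp : μ (g^[k] ⁻¹' Cinf) = μ Cinf := (hg.iterate k).measure_preimage
      hCinfmeas.nullMeasurableSet
    rw [measure_diff (hinv k) hCinfmeas.nullMeasurableSet (measure_ne_top μ _), hmp,
      tsub_self]
  -- A ∩ Cinf = ∅
  have hAC : A ∩ Cinf = ∅ := by
    apply Set.eq_empty_iff_forall_notMem.mpr
    intro x ⟨hxA, hxC⟩
    exact (hmemCinf x).mp hxC 0 hxA
  -- the measures μ (C N \ Cinf) tend to 0
  have htend : Filter.Tendsto (fun N => μ (C N \ Cinf)) Filter.atTop (nhds 0) := by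
    have h1 : Filter.Tendsto (fun N => μ (C N \ Cinf)) Filter.atTop
        (nhds (μ (⋂ N, C N \ Cinf))) := by
      apply tendsto_measure_iInter_atTop
        (fun N => ((hCmeas N).diff hCinfmeas).nullMeasurableSet)
        (fun M N hMN => Set.diff_subset_diff_left (hanti hMN))
        ⟨0, measure_ne_top μ _⟩
    have h2 : (⋂ N, C N \ Cinf) = ∅ := by
      apply Set.eq_empty_iff_forall_notMem.mpr
      intro x hx
      have h3 := Set.mem_iInter.mp hx
      exact (h3 0).2 (hiInter ▸ Set.mem_iInter.mpr fun N => (h3 N).1)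
    rwa [h2, measure_empty] at h1
  have hεpos : (0 : ENNReal) < ENNReal.ofReal ε := ENNReal.ofReal_pos.mpr hε
  obtain ⟨N, hN⟩ := (htend.eventually_lt_const hεpos).exists_forall_of_atTop
  refine ⟨N, fun n hn => ?_⟩
  set k := n - N with hkdef
  -- inclusion: bad set ⊆ A ∩ g^[k] ⁻¹' (C N)
  have hsub : {x ∈ A | ∀ j : ℕ, n - N ≤ j → j ≤ n → g^[j] x ∉ A}
      ⊆ A ∩ g^[k] ⁻¹' (C N) := by
    intro x hx
    obtain ⟨hxA, hxj⟩ := hx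
    refine ⟨hxA, ?_⟩
    rw [Set.mem_preimage, hmemC]
    intro i hi
    rw [← Function.iterate_add_apply]
    exact hxj (i + k) (by omega) (by omega)
  -- split
  have hsplit : A ∩ g^[k] ⁻¹' (C N)
      ⊆ (g^[k] ⁻¹' Cinf \ Cinf) ∪ g^[k] ⁻¹' (C N \ Cinf) := by
    intro x ⟨hxA, hxC⟩
    by_cases hx : x ∈ g^[k] ⁻¹' Cinf
    · left
      refine ⟨hx, fun hxc => ?_⟩
      have h4 : x ∈ A ∩ Cinf := ⟨hxA, hxc⟩
      rw [hAC] at h4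
      exact h4
    · right
      exact ⟨hxC, hx⟩
  calc μ {x ∈ A | ∀ j : ℕ, n - N ≤ j → j ≤ n → g^[j] x ∉ A}
      ≤ μ ((g^[k] ⁻¹' Cinf \ Cinf) ∪ g^[k] ⁻¹' (C N \ Cinf)) :=
        measure_mono (hsub.trans hsplit)
    _ ≤ μ (g^[k] ⁻¹' Cinf \ Cinf) + μ (g^[k] ⁻¹' (C N \ Cinf)) := measure_union_le _ _
    _ = μ (C N \ Cinf) := by
        rw [hnull k, zero_add]
        exact (hg.iterate k).measure_preimage
          (((hCmeas N).diff hCinfmeas).nullMeasurableSet)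
    _ < ENNReal.ofReal ε := hN N le_rfl
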